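/- Let (X, A, f, α, r) be an entropy preserving reversible micro-macro dynamical system and n ≥ 1. For the n-step entropy production rate σₙ(i) = (S(αⁿ(i)) − S(i))/n and the probability q on X given by q(i) = 1/(|A|·|f⁻¹(f(i))|), the density Wₙ(x) = Σ_{i : σₙ(i) = x} q(i) satisfies the fluctuation relation Wₙ(x) = e^{n x} Wₙ(−x) for every x ∈ ℝ. -/

import Mathlib

open Finset

/-- Fluctuation relation `Wₙ(x) = e^{nx} Wₙ(-x)` for the density of the n-step
entropy production rate with respect to the probability `q(i) = 1/(|A||f⁻¹(f(i))|)`,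
on an entropy preserving reversible micro-macro dynamical system. -/
theorem stmt10 {X A : Type*} [Fintype X] [Fintype A] [DecidableEq A]
    (f : X → A) (hf : Function.Surjective f) (α : X ≃ X)
    (r : X → X) (hr2 : ∀ i, r (r i) = i) (hrar : ∀ i, r (α (r i)) = α.symm i)
    (fib : A → ℕ) (hfib : ∀ a, fib a = (univ.filter (fun i => f i = a)).card)
    (hfibr : ∀ i, fib (f (r i)) = fib (f i))
    (S : X → ℝ) (hS : ∀ i, S i = Real.log (fib (f i)))
    (n : ℕ) (hn : 1 ≤ n)
    (σ : X → ℝ) (hσ : ∀ i, σ i = (S ((⇑α)^[n] i) - S i) / n)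
    (q : X → ℝ) (hq : ∀ i, q i = 1 / ((Fintype.card A : ℝ) * fib (f i)))
    (W : ℝ → ℝ) (hW : ∀ x, W x = ∑ i ∈ univ.filter (fun i => σ i = x), q i) :
    ∀ x : ℝ, W x = Real.exp (n * x) * W (-x) := by
  classical
  -- positivity of fibres
  have hpos : ∀ a, (0 : ℝ) < fib a := by
    intro a
    have : 0 < fib a := by
      rw [hfib]
      obtain ⟨i, hi⟩ := hf a
      exact Finset.card_pos.2 ⟨i, by simp [hi]⟩
    exact_mod_cast this
  -- α r = r α⁻¹
  have har : ∀ i, α (r i) = r (α.symm i) := by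
    intro i
    have := hrar i
    calc α (r i) = r (r (α (r i))) := (hr2 _).symm
    _ = r (α.symm i) := by rw [this]
  -- key: α^[m] (r (α^[m] i)) = r i
  have hkey : ∀ m i, (⇑α)^[m] (r ((⇑α)^[m] i)) = r i := by
    intro m
    induction m with
    | zero => intro i; simp
    | succ m ih =>
      intro i
      have h1 : (⇑α)^[m+1] i = (⇑α)^[m] (α i) := Function.iterate_succ_apply _ _ _
      have h2 : (⇑α)^[m+1] (r ((⇑α)^[m] (α i))) = (⇑α)^[m] (α (r ((⇑α)^[m] (α i)))) :=
        Function.iterate_succ_apply _ _ _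
      rw [h1, h2, har]
      have h3 : α.symm ((⇑α)^[m] (α i)) = (⇑α)^[m] i := by
        rw [← Function.iterate_succ_apply, Function.iterate_succ_apply']
        exact α.symm_apply_apply _
      rw [h3, ih]
  set φ : X → X := fun i => r ((⇑α)^[n] i) with hφ
  have hφφ : ∀ i, φ (φ i) = i := by
    intro i
    simp only [hφ]
    rw [hkey, hr2]
  -- S (φ i) = S (α^[n] i), S (α^[n] (φ i)) = S i
  have hSφ : ∀ i, S (φ i) = S ((⇑α)^[n] i) := by
    intro i; rw [hS, hS, hfibr]
  have hSφ2 : ∀ i, S ((⇑α)^[n] (φ i)) = S i := by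
    intro i
    simp only [hφ]
    rw [hkey, hS, hS, hfibr]
  have hσφ : ∀ i, σ (φ i) = -σ i := by
    intro i
    rw [hσ, hσ, hSφ, hSφ2]
    ring
  intro x
  have hnpos : (0 : ℝ) < n := by exact_mod_cast hn
  -- for i with σ i = x, q i = exp (n x) * q (φ i)
  have hqφ : ∀ i, σ i = x → q i = Real.exp (n * x) * q (φ i) := by
    intro i hi
    have hlog : Real.log (fib (f ((⇑α)^[n] i))) - Real.log (fib (f i)) = n * x := by
      rw [hσ, hS, hS] at hi
      have := (div_eq_iff hnpos.ne').mp hi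
      rw [mul_comm] at this
      linarith
    have hfφ : (fib (f (φ i)) : ℝ) = fib (f ((⇑α)^[n] i)) := by
      simp only [hφ]; rw [hfibr]
    have hexp : (fib (f ((⇑α)^[n] i)) : ℝ) = Real.exp (n * x) * fib (f i) := by
      have := Real.exp_log (hpos (f ((⇑α)^[n] i)))
      rw [← this, ← Real.exp_log (hpos (f i)), ← Real.exp_add, ← hlog]
      ring_nf
    rw [hq, hq, hfφ, hexp]
    have h1 := hpos (f i)
    have h2 := Real.exp_pos (n * x)
    have hc : (0:ℝ) < Fintype.card A := by
      have : 0 < Fintype.card A := Fintype.card_pos_iff.2 ⟨f i⟩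
      exact_mod_cast this
    rw [mul_one_div, div_eq_div_iff (mul_pos hc h1).ne' (mul_pos hc (mul_pos h2 h1)).ne']
    ring
  rw [hW, hW, Finset.mul_sum]
  refine Finset.sum_nbij' (i := φ) (j := φ) ?_ ?_ ?_ ?_ ?_
  · intro a ha
    simp only [mem_filter, mem_univ, true_and] at ha ⊢
    rw [hσφ, ha]
  · intro a ha
    simp only [mem_filter, mem_univ, true_and] at ha ⊢
    rw [hσφ, ha, neg_neg]
  · intro a _; exact hφφ a
  · intro a _; exact hφφ a
  · intro a ha
    simp only [mem_filter, mem_univ, true_and] at ha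
    exact hqφ a ha
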